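/- With ψ as above and Q_k(z) = ψ^{(k)}(z)ψ^{(k+2)}(z) − (ψ^{(k+1)}(z))², the function Ψ_k(x) = (ψ^{(k+1)}(x))² / (ψ^{(k)}(x)ψ^{(k+2)}(x)) is strictly increasing on ℝ for every k ∈ ℕ₀. -/

import Mathlib

open Set

/-- Parabolic cylinder function `D_α(x)` for `α < 0` (integral representation). -/
noncomputable def Dcyl (α x : ℝ) : ℝ :=
  Real.exp (-x ^ 2 / 4) / Real.Gamma (-α) *
    ∫ t in Ioi (0 : ℝ), t ^ (-α - 1) * Real.exp (-t ^ 2 / 2 - x * t)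

/-- Increasing fundamental solution of `(σ²/2)u'' + κ(μ−x)u' − ρu = 0`. -/
noncomputable def psi (κ μ σ ρ : ℝ) (x : ℝ) : ℝ :=
  Real.exp (κ * (x - μ) ^ 2 / (2 * σ ^ 2)) *
    Dcyl (-(ρ / κ)) (-((x - μ) / σ) * Real.sqrt (2 * κ))

/-- Decreasing fundamental solution of `(σ²/2)u'' + κ(μ−x)u' − ρu = 0`. -/
noncomputable def phi (κ μ σ ρ : ℝ) (x : ℝ) : ℝ :=
  Real.exp (κ * (x - μ) ^ 2 / (2 * σ ^ 2)) *
    Dcyl (-(ρ / κ)) (((x - μ) / σ) * Real.sqrt (2 * κ))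

open MeasureTheory Filter

noncomputable def gg (p b : ℝ) : ℝ := ∫ t in Ioi (0:ℝ), t ^ p * Real.exp (b * t - t ^ 2 / 2)

lemma gg_meas (p b : ℝ) : AEStronglyMeasurable (fun t : ℝ => t ^ p * Real.exp (b * t - t ^ 2 / 2))
    (volume.restrict (Ioi 0)) := by
  apply Measurable.aestronglyMeasurable
  fun_prop

lemma gg_integrableOn (p b : ℝ) (hp : -1 < p) :
    IntegrableOn (fun t : ℝ => t ^ p * Real.exp (b * t - t ^ 2 / 2)) (Ioi 0) := by
  have h0 : (0:ℝ) < p + 1 := by linarith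
  have h := (Real.GammaIntegral_convergent h0).const_mul (Real.exp ((b + 1) ^ 2 / 2))
  apply Integrable.mono' h (gg_meas p b)
  rw [ae_restrict_iff' measurableSet_Ioi]
  filter_upwards with t ht
  have ht' : (0:ℝ) < t := ht
  have h1 : (0:ℝ) ≤ t ^ p := Real.rpow_nonneg ht'.le p
  rw [Real.norm_eq_abs, abs_mul, abs_of_nonneg h1, abs_of_nonneg (Real.exp_pos _).le]
  have h2 : Real.exp (b * t - t ^ 2 / 2) ≤ Real.exp ((b + 1) ^ 2 / 2) * Real.exp (-t) := by
    rw [← Real.exp_add]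
    apply Real.exp_le_exp.2
    nlinarith [sq_nonneg (t - (b + 1))]
  have : t ^ p * Real.exp (b * t - t ^ 2 / 2)
      ≤ t ^ p * (Real.exp ((b + 1) ^ 2 / 2) * Real.exp (-t)) :=
    mul_le_mul_of_nonneg_left h2 h1
  calc t ^ p * Real.exp (b * t - t ^ 2 / 2)
      ≤ t ^ p * (Real.exp ((b + 1) ^ 2 / 2) * Real.exp (-t)) := this
    _ = Real.exp ((b + 1) ^ 2 / 2) * (Real.exp (-t) * t ^ (p + 1 - 1)) := by ring_nf

lemma gg_pos (p b : ℝ) (hp : -1 < p) : 0 < gg p b := by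
  rw [gg]
  apply (integral_pos_iff_support_of_nonneg_ae _ (gg_integrableOn p b hp)).2
  · have : (Ioi (0:ℝ)) ⊆ Function.support fun t : ℝ => t ^ p * Real.exp (b * t - t ^ 2 / 2) := by
      intro t ht
      exact ne_of_gt (mul_pos (Real.rpow_pos_of_pos ht p) (Real.exp_pos _))
    calc (0:ENNReal) < volume.restrict (Ioi 0) (Ioi (0:ℝ)) := by
          rw [Measure.restrict_apply measurableSet_Ioi, inter_self]
          simp
      _ ≤ _ := measure_mono this
  · rw [EventuallyLE, ae_restrict_iff' measurableSet_Ioi]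
    filter_upwards with t ht
    exact mul_nonneg (Real.rpow_nonneg (le_of_lt ht) p) (Real.exp_pos _).le

lemma gg_hasDerivAt (p b : ℝ) (hp : -1 < p) :
    HasDerivAt (fun b => gg p b) (gg (p + 1) b) b := by
  have key := hasDerivAt_integral_of_dominated_loc_of_deriv_le (F := fun b t =>
      t ^ p * Real.exp (b * t - t ^ 2 / 2))
      (F' := fun b t => t ^ (p + 1) * Real.exp (b * t - t ^ 2 / 2))
      (μ := volume.restrict (Ioi 0)) (x₀ := b)
      (bound := fun t => t ^ (p + 1) * Real.exp ((b + 1) * t - t ^ 2 / 2))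
      (s := Metric.ball b 1) (Metric.ball_mem_nhds b one_pos)
      (Eventually.of_forall fun x => gg_meas p x)
      (gg_integrableOn p b hp) (gg_meas (p + 1) b) ?_
      (gg_integrableOn (p + 1) (b + 1) (by linarith)) ?_
  · exact key.2
  · rw [ae_restrict_iff' measurableSet_Ioi]
    filter_upwards with t ht x hx
    have ht' : (0:ℝ) < t := ht
    have h1 : (0:ℝ) ≤ t ^ (p + 1) := Real.rpow_nonneg ht'.le _
    rw [Real.norm_eq_abs, abs_mul, abs_of_nonneg h1, abs_of_nonneg (Real.exp_pos _).le]
    apply mul_le_mul_of_nonneg_left _ h1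
    apply Real.exp_le_exp.2
    have : x ≤ b + 1 := by
      have := mem_ball_iff_norm.1 hx
      rw [Real.norm_eq_abs] at this
      cases abs_lt.1 this with
      | intro h1 h2 => linarith
    nlinarith
  · rw [ae_restrict_iff' measurableSet_Ioi]
    filter_upwards with t ht x _
    have ht' : (0:ℝ) < t := ht
    have h : HasDerivAt (fun x : ℝ => x * t - t ^ 2 / 2) t x := by
      simpa using (hasDerivAt_id x).mul_const t |>.sub_const (t ^ 2 / 2)
    have h2 := (Real.hasDerivAt_exp (x * t - t ^ 2 / 2)).comp x h
    have h3 := h2.const_mul (t ^ p)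
    refine HasDerivAt.congr_deriv h3 (Eq.symm ?_)
    rw [Real.rpow_add_one (ne_of_gt ht')]
    ring

lemma gg_cont (p : ℝ) (hp : -1 < p) : Continuous (fun b => gg p b) :=
  continuous_iff_continuousAt.2 fun b => (gg_hasDerivAt p b hp).continuousAt

-- recurrence
lemma gg_rec (p b : ℝ) (hp : -1 < p) :
    gg (p + 2) b = (p + 1) * gg p b + b * gg (p + 1) b := by
  set E : ℝ → ℝ := fun t => Real.exp (b * t - t ^ 2 / 2) with hE
  have hp1 : (0:ℝ) < p + 1 := by linarith
  have key : ∫ t in Ioi (0:ℝ),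
      (((p + 1) * (t ^ p * E t) + b * (t ^ (p + 1) * E t)) - t ^ (p + 2) * E t)
      = 0 - (fun t : ℝ => t ^ (p + 1) * E t) 0 := by
    apply integral_Ioi_of_hasDerivAt_of_tendsto (f := fun t => t ^ (p + 1) * E t)
    · -- continuity at 0 within Ici 0
      apply ContinuousAt.continuousWithinAt
      apply ContinuousAt.mul
      · exact Real.continuousAt_rpow_const 0 (p + 1) (Or.inr hp1.le)
      · fun_prop
    · intro t ht
      have ht' : (0:ℝ) < t := ht
      have h1 : HasDerivAt (fun t : ℝ => t ^ (p + 1)) ((p + 1) * t ^ p) t := by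
        have := Real.hasDerivAt_rpow_const (x := t) (p := p + 1) (Or.inl (ne_of_gt ht'))
        simpa using this
      have h2 : HasDerivAt E ((b - t) * E t) t := by
        have hi : HasDerivAt (fun t : ℝ => b * t - t ^ 2 / 2) (b - t) t := by
          have := ((hasDerivAt_id t).const_mul b).fun_sub
            (((hasDerivAt_pow 2 t)).div_const 2)
          simpa using this
        exact ((Real.hasDerivAt_exp (b * t - t ^ 2 / 2)).comp t hi).congr_deriv (mul_comm _ _)
      have h3 := h1.fun_mul h2
      refine HasDerivAt.congr_deriv h3 (Eq.symm ?_)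
      have e1 : t ^ (p + 1) = t ^ p * t := by
        rw [Real.rpow_add ht', Real.rpow_one]
      have e2 : t ^ (p + 2) = t ^ p * (t * t) := by
        rw [Real.rpow_add ht', show (2:ℝ) = ((2:ℕ):ℝ) by norm_num, Real.rpow_natCast]
        ring
      rw [e1, e2]
      ring
    · -- integrability of the combination
      apply Integrable.sub
      apply Integrable.add
      · exact ((gg_integrableOn p b hp).const_mul _)
      · exact ((gg_integrableOn (p + 1) b (by linarith)).const_mul _)
      · exact (gg_integrableOn (p + 2) b (by linarith))
    · -- tendsto 0 at top
      have hub : ∀ᶠ t : ℝ in atTop, ‖t ^ (p + 1) * E t‖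
          ≤ (t ^ (⌈p + 1⌉₊ : ℕ) : ℝ) * Real.exp (-t) := by
        filter_upwards [eventually_ge_atTop (1:ℝ), eventually_ge_atTop (2 * (b + 1))]
          with t ht1 ht2
        have ht' : (0:ℝ) < t := by linarith
        have h1 : t ^ (p + 1) ≤ (t ^ (⌈p + 1⌉₊ : ℕ) : ℝ) := by
          rw [← Real.rpow_natCast t]
          exact Real.rpow_le_rpow_of_exponent_le ht1 (Nat.le_ceil _)
        have h2 : E t ≤ Real.exp (-t) := by
          apply Real.exp_le_exp.2
          nlinarith
        rw [Real.norm_eq_abs, abs_mul, abs_of_nonneg (Real.rpow_nonneg ht'.le _),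
          abs_of_nonneg (Real.exp_pos _).le]
        exact mul_le_mul h1 h2 (Real.exp_pos _).le (by positivity)
      have hlim : Tendsto (fun t : ℝ => (t ^ (⌈p + 1⌉₊ : ℕ) : ℝ) * Real.exp (-t)) atTop (nhds 0) :=
        Real.tendsto_pow_mul_exp_neg_atTop_nhds_zero _
      exact squeeze_zero_norm' hub hlim
  have e1 : ∫ t in Ioi (0:ℝ),
      (((p + 1) * (t ^ p * E t) + b * (t ^ (p + 1) * E t)) - t ^ (p + 2) * E t)
      = ((p + 1) * gg p b + b * gg (p + 1) b) - gg (p + 2) b := by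
    rw [integral_sub, integral_add]
    · rw [integral_const_mul, integral_const_mul, gg, gg, gg]
    · exact ((gg_integrableOn p b hp).const_mul _)
    · exact ((gg_integrableOn (p + 1) b (by linarith)).const_mul _)
    · apply Integrable.add
      · exact ((gg_integrableOn p b hp).const_mul _)
      · exact ((gg_integrableOn (p + 1) b (by linarith)).const_mul _)
    · exact (gg_integrableOn (p + 2) b (by linarith))
  rw [e1] at key
  have e2 : (fun t : ℝ => t ^ (p + 1) * E t) 0 = 0 := by
    simp [Real.zero_rpow (ne_of_gt hp1)]
  rw [e2] at key
  linarith

lemma gg_tendsto_atBot (p : ℝ) (hp : -1 < p) : Tendsto (fun b => gg p b) atBot (nhds 0) := by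
  have h0 : (0:ℝ) = ∫ t in Ioi (0:ℝ), (0:ℝ) := by simp
  rw [show nhds (0:ℝ) = nhds (∫ t in Ioi (0:ℝ), (0:ℝ)) by rw [← h0]]
  apply tendsto_integral_filter_of_dominated_convergence
    (bound := fun t => t ^ p * Real.exp (0 * t - t ^ 2 / 2))
  · exact Eventually.of_forall fun b => gg_meas p b
  · filter_upwards [eventually_le_atBot (0:ℝ)] with b hb
    rw [ae_restrict_iff' measurableSet_Ioi]
    filter_upwards with t ht
    have ht' : (0:ℝ) < t := ht
    rw [Real.norm_eq_abs, abs_mul, abs_of_nonneg (Real.rpow_nonneg ht'.le _),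
      abs_of_nonneg (Real.exp_pos _).le]
    apply mul_le_mul_of_nonneg_left _ (Real.rpow_nonneg ht'.le _)
    apply Real.exp_le_exp.2
    nlinarith
  · exact gg_integrableOn p 0 hp
  · rw [ae_restrict_iff' measurableSet_Ioi]
    filter_upwards with t ht
    have ht' : (0:ℝ) < t := ht
    have h1 : Tendsto (fun b : ℝ => b * t - t ^ 2 / 2) atBot atBot := by
      apply tendsto_atBot_add_const_right
      exact tendsto_id.atBot_mul_const ht'
    have h2 := (Real.tendsto_exp_atBot).comp h1
    have h3 := h2.const_mul (t ^ p)
    simpa using h3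

lemma pos_of_deriv_pos_of_tendsto (Y Y' : ℝ → ℝ) (hd : ∀ b, HasDerivAt Y (Y' b) b)
    (hp : ∀ b, 0 < Y' b) (hl : Tendsto Y atBot (nhds 0)) : ∀ b, 0 < Y b := by
  have hm : StrictMono Y := by
    apply strictMono_of_deriv_pos
    intro b; rw [(hd b).deriv]; exact hp b
  intro b
  have h1 : 0 ≤ Y (b - 1) := by
    apply le_of_tendsto hl
    filter_upwards [eventually_le_atBot (b - 1)] with a ha
    exact hm.le_iff_le.2 ha
  calc (0:ℝ) ≤ Y (b - 1) := h1
    _ < Y b := hm (by linarith)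

lemma P_pos (p b : ℝ) (hp : -1 < p) :
    (gg (p + 1) b) ^ 2 < gg p b * gg (p + 2) b := by
  set Y : ℝ → ℝ := fun b =>
    (gg p b * gg (p + 2) b - (gg (p + 1) b) ^ 2) * Real.exp (-b ^ 2 / 2) with hY
  have key : ∀ b, 0 < Y b := by
    apply pos_of_deriv_pos_of_tendsto Y
      (fun b => gg p b * gg (p + 1) b * Real.exp (-b ^ 2 / 2))
    · intro b
      have hP : HasDerivAt (fun b => gg p b * gg (p + 2) b - (gg (p + 1) b) ^ 2)
          (gg (p + 1) b * gg (p + 2) b + gg p b * gg (p + 3) b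
            - 2 * gg (p + 2) b * gg (p + 1) b) b := by
        have h1 := (gg_hasDerivAt p b hp).fun_mul (by
          have := gg_hasDerivAt (p + 2) b (by linarith)
          rwa [show p + 2 + 1 = p + 3 by ring] at this)
        have h2 := ((gg_hasDerivAt (p + 1) b (by linarith)).fun_pow 2)
        have h3 := h1.fun_sub h2
        refine HasDerivAt.congr_deriv h3 (Eq.symm ?_)
        rw [show p + 1 + 1 = p + 2 by ring]
        ring
      have hE : HasDerivAt (fun b : ℝ => Real.exp (-b ^ 2 / 2)) (-b * Real.exp (-b ^ 2 / 2)) b := by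
        have hi : HasDerivAt (fun b : ℝ => -b ^ 2 / 2) (-b) b := by
          have h := ((hasDerivAt_pow 2 b).fun_neg).div_const 2
          refine HasDerivAt.congr_deriv h (Eq.symm ?_)
          ring
        exact ((Real.hasDerivAt_exp _).comp b hi).congr_deriv (mul_comm _ _)
      have h4 := hP.fun_mul hE
      refine HasDerivAt.congr_deriv h4 (Eq.symm ?_)
      have r1 := gg_rec p b hp
      have r2 := gg_rec (p + 1) b (by linarith)
      rw [show p + 1 + 2 = p + 3 by ring, show p + 1 + 1 = p + 2 by ring] at r2
      linear_combination (-(gg p b) * Real.exp (-b ^ 2 / 2)) * r2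
        + (gg (p + 1) b * Real.exp (-b ^ 2 / 2)) * r1
    · intro b
      have h1 := gg_pos p b hp
      have h2 := gg_pos (p + 1) b (by linarith)
      positivity
    · have hPl : Tendsto (fun b => gg p b * gg (p + 2) b - (gg (p + 1) b) ^ 2) atBot
          (nhds 0) := by
        have := ((gg_tendsto_atBot p hp).mul (gg_tendsto_atBot (p + 2) (by linarith))).sub
          ((gg_tendsto_atBot (p + 1) (by linarith)).pow 2)
        simpa using this
      have hb : ∀ᶠ b in atBot, ‖Y b‖ ≤ |gg p b * gg (p + 2) b - (gg (p + 1) b) ^ 2| := by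
        filter_upwards with b
        rw [hY, Real.norm_eq_abs, abs_mul, abs_of_nonneg (Real.exp_pos _).le]
        have : Real.exp (-b ^ 2 / 2) ≤ 1 := by
          rw [show (1:ℝ) = Real.exp 0 by simp]
          apply Real.exp_le_exp.2
          nlinarith [sq_nonneg b]
        nlinarith [abs_nonneg (gg p b * gg (p + 2) b - (gg (p + 1) b) ^ 2)]
      exact squeeze_zero_norm' hb (by simpa using hPl.abs)
  have := key b
  rw [hY] at this
  nlinarith [Real.exp_pos (-b ^ 2 / 2), this]

section S
variable {p : ℝ} (hp : -1 < p)

lemma tail_bound (b : ℝ) (hb : b ≤ -Real.sqrt (8 * (p + 1))) (hp : -1 < p) :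
    2 * (gg (p + 1) b) ^ 2 ≤ (p + 1) * (gg p b) ^ 2 := by
  set s := Real.sqrt (8 * (p + 1)) with hs
  have hβ : (0:ℝ) < p + 1 := by linarith
  have hs2 : s ^ 2 = 8 * (p + 1) := Real.sq_sqrt (by linarith)
  have hs0 : 0 ≤ s := Real.sqrt_nonneg _
  have hg0 := gg_pos p b hp
  have hg1 := gg_pos (p + 1) b (by linarith)
  have hP := P_pos p b hp
  have r1 := gg_rec p b hp
  by_contra hcon
  push_neg at hcon
  set X := gg (p + 1) b with hX
  set Y := gg p b with hYd
  -- from hP and r1 : X^2 < (p+1)*Y^2 + b*Y*X ≤ (p+1)*Y^2 - s*Y*X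
  have h1 : X ^ 2 + s * (Y * X) < (p + 1) * Y ^ 2 := by
    have hb' : b * (Y * X) ≤ -s * (Y * X) :=
      mul_le_mul_of_nonneg_right hb (by positivity)
    nlinarith [hP, r1]
  have key1 : s * (Y * X) < X ^ 2 := by nlinarith
  have key2 : s ^ 2 * (Y * X) ^ 2 < X ^ 4 := by
    have h0 : 0 ≤ s * (Y * X) := by positivity
    nlinarith [key1, h0]
  have key3 : 8 * (p + 1) * Y ^ 2 < X ^ 2 := by
    have hXX : 0 < X ^ 2 := by positivity
    rw [hs2] at key2
    have : (Y * X) ^ 2 = Y ^ 2 * X ^ 2 := by ring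
    nlinarith
  nlinarith [h1, key3, mul_pos (mul_pos hβ hg0) hg0, mul_nonneg hs0 (by positivity : (0:ℝ) ≤ Y * X)]

noncomputable def Sf (p : ℝ) : ℝ → ℝ := fun b =>
  2 * gg p b * (gg (p + 2) b) ^ 2 - (gg (p + 1) b) ^ 2 * gg (p + 2) b
    - gg p b * gg (p + 1) b * gg (p + 3) b

noncomputable def Af (p : ℝ) : ℝ → ℝ := fun b =>
  (2 * (gg (p + 1) b) ^ 2 - (p + 1) * (gg p b) ^ 2) / (gg p b * gg (p + 1) b)

lemma Af_cont (hp : -1 < p) : Continuous (Af p) := by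
  apply Continuous.div
  · exact (continuous_const.mul ((gg_cont (p+1) (by linarith)).pow 2)).sub
      (continuous_const.mul ((gg_cont p hp).pow 2))
  · exact (gg_cont p hp).mul (gg_cont (p+1) (by linarith))
  · intro b
    exact ne_of_gt (mul_pos (gg_pos p b hp) (gg_pos (p+1) b (by linarith)))

lemma Sf_hasDerivAt (hp : -1 < p) (b : ℝ) :
    HasDerivAt (Sf p) (3 * gg p b * gg (p + 2) b * gg (p + 3) b
      - 2 * (gg (p + 1) b) ^ 2 * gg (p + 3) b - gg p b * gg (p + 1) b * gg (p + 4) b) b := by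
  have d0 := gg_hasDerivAt p b hp
  have d1 := gg_hasDerivAt (p+1) b (by linarith)
  have d2 := gg_hasDerivAt (p+2) b (by linarith)
  have d3 := gg_hasDerivAt (p+3) b (by linarith)
  rw [show p + 1 + 1 = p + 2 by ring] at d1
  rw [show p + 2 + 1 = p + 3 by ring] at d2
  rw [show p + 3 + 1 = p + 4 by ring] at d3
  have h := (((d0.fun_mul (d2.fun_pow 2)).const_mul 2).fun_sub ((d1.fun_pow 2).fun_mul d2)).fun_sub
    ((d0.fun_mul d1).fun_mul d3)
  have hfun : Sf p = (fun x => 2 * (gg p x * gg (p + 2) x ^ 2)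
      - gg (p + 1) x ^ 2 * gg (p + 2) x - gg p x * gg (p + 1) x * gg (p + 3) x) := by
    unfold Sf; funext x; ring
  rw [hfun]
  refine HasDerivAt.congr_deriv h (Eq.symm ?_)
  push_cast
  ring

lemma Sf_identity (hp : -1 < p) (b : ℝ) :
    gg p b * gg (p + 1) b * (3 * gg p b * gg (p + 2) b * gg (p + 3) b
        - 2 * (gg (p + 1) b) ^ 2 * gg (p + 3) b - gg p b * gg (p + 1) b * gg (p + 4) b)
      = 2 * gg (p + 2) b * (gg p b * gg (p + 2) b - (gg (p + 1) b) ^ 2) ^ 2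
        + (2 * (gg (p + 1) b) ^ 2 - (p + 1) * (gg p b) ^ 2) * Sf p b := by
  have r1 := gg_rec p b hp
  have r2 := gg_rec (p+1) b (by linarith)
  have r3 := gg_rec (p+2) b (by linarith)
  rw [show p + 1 + 2 = p + 3 by ring, show p + 1 + 1 = p + 2 by ring] at r2
  rw [show p + 2 + 2 = p + 4 by ring, show p + 2 + 1 = p + 3 by ring] at r3
  rw [Sf, r3, r2, r1]
  ring

end S

noncomputable def Wf (p : ℝ) : ℝ → ℝ := fun b =>
  ∫ t in (-Real.sqrt (8 * (p + 1)))..b, Af p t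

open intervalIntegral in
lemma Wf_hasDerivAt (hp : -1 < p) (b : ℝ) : HasDerivAt (Wf p) (Af p b) b :=
  integral_hasDerivAt_right ((Af_cont hp).intervalIntegrable _ _)
    ((Af_cont hp).stronglyMeasurableAtFilter _ _) (Af_cont hp).continuousAt

lemma Af_nonpos (hp : -1 < p) (b : ℝ) (hb : b ≤ -Real.sqrt (8 * (p + 1))) : Af p b ≤ 0 := by
  rw [Af]
  apply div_nonpos_of_nonpos_of_nonneg
  · have := tail_bound b hb hp
    linarith
  · exact (mul_pos (gg_pos p b hp) (gg_pos (p+1) b (by linarith))).le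

lemma Wf_nonneg (hp : -1 < p) (b : ℝ) (hb : b ≤ -Real.sqrt (8 * (p + 1))) : 0 ≤ Wf p b := by
  rw [Wf, intervalIntegral.integral_symm]
  have h : 0 ≤ ∫ t in b..(-Real.sqrt (8 * (p + 1))), (-(Af p t)) :=
    intervalIntegral.integral_nonneg hb (fun u hu => neg_nonneg.2 (Af_nonpos hp u hu.2))
  rw [intervalIntegral.integral_neg] at h
  linarith

lemma Sf_pos (hp : -1 < p) (b : ℝ) : 0 < Sf p b := by
  set Y : ℝ → ℝ := fun b => Sf p b * Real.exp (-(Wf p b)) with hY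
  have hg0 := fun b => gg_pos p b hp
  have hg1 := fun b => gg_pos (p+1) b (by linarith : (-1:ℝ) < p + 1)
  have hg2 := fun b => gg_pos (p+2) b (by linarith : (-1:ℝ) < p + 2)
  have key : ∀ b, 0 < Y b := by
    apply pos_of_deriv_pos_of_tendsto Y (fun b =>
      2 * gg (p + 2) b * (gg p b * gg (p + 2) b - (gg (p + 1) b) ^ 2) ^ 2
        / (gg p b * gg (p + 1) b) * Real.exp (-(Wf p b)))
    · intro b
      have hE : HasDerivAt (fun b => Real.exp (-(Wf p b)))
          (-(Af p b) * Real.exp (-(Wf p b))) b := by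
        have h1 := ((Wf_hasDerivAt hp b).fun_neg)
        exact ((Real.hasDerivAt_exp _).comp b h1).congr_deriv (mul_comm _ _)
      have h2 := (Sf_hasDerivAt hp b).fun_mul hE
      have hne : gg p b * gg (p + 1) b ≠ 0 := ne_of_gt (mul_pos (hg0 b) (hg1 b))
      have hid := Sf_identity hp b
      have hA : Af p b * (gg p b * gg (p + 1) b)
          = 2 * (gg (p + 1) b) ^ 2 - (p + 1) * (gg p b) ^ 2 := by
        rw [Af, div_mul_cancel₀ _ hne]
      have key3 : (3 * gg p b * gg (p + 2) b * gg (p + 3) b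
            - 2 * (gg (p + 1) b) ^ 2 * gg (p + 3) b - gg p b * gg (p + 1) b * gg (p + 4) b)
          - Af p b * Sf p b
          = 2 * gg (p + 2) b * (gg p b * gg (p + 2) b - (gg (p + 1) b) ^ 2) ^ 2
            / (gg p b * gg (p + 1) b) := by
        rw [eq_div_iff hne]
        linear_combination hid - (Sf p b) * hA
      refine HasDerivAt.congr_deriv h2 (Eq.symm ?_)
      rw [← key3]
      ring
    · intro b
      have hP := P_pos p b hp
      have h1 : 0 < 2 * gg (p + 2) b * (gg p b * gg (p + 2) b - (gg (p + 1) b) ^ 2) ^ 2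
          / (gg p b * gg (p + 1) b) := by
        apply div_pos _ (mul_pos (hg0 b) (hg1 b))
        have hPP : 0 < gg p b * gg (p + 2) b - (gg (p + 1) b) ^ 2 := by linarith [hP]
        nlinarith [hg2 b, pow_pos hPP 2]
      exact mul_pos h1 (Real.exp_pos _)
    · have hSl : Tendsto (Sf p) atBot (nhds 0) := by
        have h0 := gg_tendsto_atBot p hp
        have h1 := gg_tendsto_atBot (p+1) (by linarith)
        have h2 := gg_tendsto_atBot (p+2) (by linarith)
        have h3 := gg_tendsto_atBot (p+3) (by linarith)
        have h4 := ((((h0.mul (h2.pow 2)).const_mul 2).sub ((h1.pow 2).mul h2)).sub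
          ((h0.mul h1).mul h3))
        have heq : Sf p = fun x => 2 * (gg p x * gg (p + 2) x ^ 2)
            - gg (p + 1) x ^ 2 * gg (p + 2) x - gg p x * gg (p + 1) x * gg (p + 3) x := by
          funext x; rw [Sf]; ring
        rw [heq]
        simpa using h4
      have hb : ∀ᶠ b in atBot, ‖Y b‖ ≤ |Sf p b| := by
        filter_upwards [eventually_le_atBot (-Real.sqrt (8 * (p + 1)))] with b hble
        have hW := Wf_nonneg hp b hble
        have hexp : Real.exp (-(Wf p b)) ≤ 1 := by
          rw [show (1:ℝ) = Real.exp 0 by simp]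
          exact Real.exp_le_exp.2 (by linarith)
        rw [hY, Real.norm_eq_abs, abs_mul, abs_of_nonneg (Real.exp_pos _).le]
        nlinarith [abs_nonneg (Sf p b)]
      exact squeeze_zero_norm' hb (by simpa using hSl.abs)
  have hb : 0 < Sf p b * Real.exp (-(Wf p b)) := key b
  nlinarith [Real.exp_pos (-(Wf p b)), hb]

lemma ratio_strictMono (p : ℝ) (hp : -1 < p) :
    StrictMono (fun b => (gg (p + 1) b) ^ 2 / (gg p b * gg (p + 2) b)) := by
  apply strictMono_of_deriv_pos
  intro b
  have hg0 := gg_pos p b hp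
  have hg1 := gg_pos (p + 1) b (by linarith)
  have hg2 := gg_pos (p + 2) b (by linarith)
  have hg3 := gg_pos (p + 3) b (by linarith)
  have d0 := gg_hasDerivAt p b hp
  have d1 := gg_hasDerivAt (p + 1) b (by linarith)
  have d2 := gg_hasDerivAt (p + 2) b (by linarith)
  rw [show p + 1 + 1 = p + 2 by ring] at d1
  rw [show p + 2 + 1 = p + 3 by ring] at d2
  have hden : gg p b * gg (p + 2) b ≠ 0 := ne_of_gt (mul_pos hg0 hg2)
  have hdiv := (d1.fun_pow 2).fun_div (d0.fun_mul d2) hden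
  rw [hdiv.deriv]
  apply div_pos
  · have hS := Sf_pos hp b
    rw [Sf] at hS
    push_cast
    nlinarith [hS, hg1]
  · positivity

lemma psi_eq (κ μ σ ρ : ℝ) (hκ : 0 < κ) (hσ : 0 < σ) (x : ℝ) :
    psi κ μ σ ρ x
      = (Real.Gamma (ρ / κ))⁻¹ * gg (ρ / κ - 1) (Real.sqrt (2 * κ) / σ * (x - μ)) := by
  rw [psi, Dcyl, gg]
  have h1 : (fun t : ℝ => t ^ (-(-(ρ / κ)) - 1) *
        Real.exp (-t ^ 2 / 2 - -((x - μ) / σ) * Real.sqrt (2 * κ) * t))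
      = fun t : ℝ => t ^ (ρ / κ - 1) *
        Real.exp (Real.sqrt (2 * κ) / σ * (x - μ) * t - t ^ 2 / 2) := by
    funext t
    rw [neg_neg]
    congr 1
    ring_nf
  rw [h1, neg_neg]
  have h2 : Real.exp (κ * (x - μ) ^ 2 / (2 * σ ^ 2)) *
      Real.exp (-(-((x - μ) / σ) * Real.sqrt (2 * κ)) ^ 2 / 4) = 1 := by
    rw [← Real.exp_add, ← Real.exp_zero]
    congr 1
    have hs : (Real.sqrt (2 * κ)) ^ 2 = 2 * κ := Real.sq_sqrt (by linarith)
    have hz : (-((x - μ) / σ) * Real.sqrt (2 * κ)) ^ 2 = 2 * κ * (x - μ) ^ 2 / σ ^ 2 := by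
      rw [mul_pow, hs]; ring
    rw [hz]
    field_simp
    ring
  calc Real.exp (κ * (x - μ) ^ 2 / (2 * σ ^ 2)) *
        (Real.exp (-(-((x - μ) / σ) * Real.sqrt (2 * κ)) ^ 2 / 4) / Real.Gamma (ρ / κ) *
          ∫ t in Ioi (0:ℝ), t ^ (ρ / κ - 1) *
            Real.exp (Real.sqrt (2 * κ) / σ * (x - μ) * t - t ^ 2 / 2))
      = (Real.exp (κ * (x - μ) ^ 2 / (2 * σ ^ 2)) *
          Real.exp (-(-((x - μ) / σ) * Real.sqrt (2 * κ)) ^ 2 / 4)) *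
          ((Real.Gamma (ρ / κ))⁻¹ *
          ∫ t in Ioi (0:ℝ), t ^ (ρ / κ - 1) *
            Real.exp (Real.sqrt (2 * κ) / σ * (x - μ) * t - t ^ 2 / 2)) := by ring
    _ = _ := by rw [h2, one_mul]

lemma iterated_psi (κ μ σ ρ : ℝ) (hκ : 0 < κ) (hσ : 0 < σ) (hρ : 0 < ρ) (k : ℕ) :
    iteratedDeriv k (psi κ μ σ ρ)
      = fun x => (Real.Gamma (ρ / κ))⁻¹ * (Real.sqrt (2 * κ) / σ) ^ k *
          gg (ρ / κ - 1 + k) (Real.sqrt (2 * κ) / σ * (x - μ)) := by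
  set a := Real.sqrt (2 * κ) / σ with ha
  have hq : (-1:ℝ) < ρ / κ - 1 := by
    have : 0 < ρ / κ := div_pos hρ hκ
    linarith
  induction k with
  | zero =>
    rw [iteratedDeriv_zero]
    funext x
    rw [psi_eq κ μ σ ρ hκ hσ x]
    simp only [Nat.cast_zero, add_zero, pow_zero, mul_one]
    rfl
  | succ k ih =>
    rw [iteratedDeriv_succ, ih]
    funext x
    have hqk : (-1:ℝ) < ρ / κ - 1 + k := by
      have : (0:ℝ) ≤ (k:ℝ) := Nat.cast_nonneg k
      linarith
    have hinner : HasDerivAt (fun x : ℝ => a * (x - μ)) a x := by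
      simpa using ((hasDerivAt_id x).sub_const μ).const_mul a
    have houter := gg_hasDerivAt (ρ / κ - 1 + k) (a * (x - μ)) hqk
    have hcomp := HasDerivAt.comp x houter hinner
    have hfull : HasDerivAt
        (fun x : ℝ => (Real.Gamma (ρ / κ))⁻¹ * a ^ k * gg (ρ / κ - 1 + ↑k) (a * (x - μ)))
        ((Real.Gamma (ρ / κ))⁻¹ * a ^ k * (gg (ρ / κ - 1 + ↑k + 1) (a * (x - μ)) * a)) x :=
      hcomp.const_mul _
    rw [hfull.deriv]
    have hcast : ρ / κ - 1 + ((k : ℝ) + 1) = ρ / κ - 1 + k + 1 := by ring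
    rw [show ((k + 1 : ℕ) : ℝ) = (k : ℝ) + 1 by push_cast; ring, hcast]
    ring


/-- The ratio `Ψ_k(x) = (ψ^{(k+1)}(x))² / (ψ^{(k)}(x)ψ^{(k+2)}(x))` is strictly
increasing on `ℝ` for every `k`. -/
theorem stmt9 (κ σ ρ μ : ℝ) (hκ : 0 < κ) (hσ : 0 < σ) (hρ : 0 < ρ) :
    ∀ k : ℕ,
      StrictMono fun x : ℝ =>
        (iteratedDeriv (k + 1) (psi κ μ σ ρ) x) ^ 2 /
          (iteratedDeriv k (psi κ μ σ ρ) x * iteratedDeriv (k + 2) (psi κ μ σ ρ) x) := by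
  intro k
  set a := Real.sqrt (2 * κ) / σ with ha
  have ha0 : 0 < a := by
    apply div_pos _ hσ
    exact Real.sqrt_pos.2 (by linarith)
  have hq : (-1:ℝ) < ρ / κ - 1 + k := by
    have h1 : 0 < ρ / κ := div_pos hρ hκ
    have : (0:ℝ) ≤ (k:ℝ) := Nat.cast_nonneg k
    linarith
  have hΓ : (Real.Gamma (ρ / κ))⁻¹ ≠ 0 := by
    have := Real.Gamma_pos_of_pos (div_pos hρ hκ)
    positivity
  have e0 := iterated_psi κ μ σ ρ hκ hσ hρ k
  have e1 := iterated_psi κ μ σ ρ hκ hσ hρ (k + 1)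
  have e2 := iterated_psi κ μ σ ρ hκ hσ hρ (k + 2)
  rw [← ha] at e0 e1 e2
  have hane : (a:ℝ) ≠ 0 := ne_of_gt ha0
  have heq : (fun x : ℝ =>
        (iteratedDeriv (k + 1) (psi κ μ σ ρ) x) ^ 2 /
          (iteratedDeriv k (psi κ μ σ ρ) x * iteratedDeriv (k + 2) (psi κ μ σ ρ) x))
      = (fun b => (gg (ρ / κ - 1 + k + 1) b) ^ 2 /
          (gg (ρ / κ - 1 + k) b * gg (ρ / κ - 1 + k + 2) b)) ∘ (fun x => a * (x - μ)) := by
    funext x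
    rw [e0, e1, e2]
    simp only [Function.comp_apply]
    set b := a * (x - μ) with hb
    have hc1 : ρ / κ - 1 + ((k:ℝ) + 1) = ρ / κ - 1 + k + 1 := by ring
    have hc2 : ρ / κ - 1 + ((k:ℝ) + 2) = ρ / κ - 1 + k + 2 := by ring
    rw [show ((k + 1 : ℕ) : ℝ) = (k : ℝ) + 1 by push_cast; ring,
      show ((k + 2 : ℕ) : ℝ) = (k : ℝ) + 2 by push_cast; ring, hc1, hc2]
    have hg0 : gg (ρ / κ - 1 + k) b ≠ 0 := ne_of_gt (gg_pos _ _ hq)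
    have hg2 : gg (ρ / κ - 1 + k + 2) b ≠ 0 := ne_of_gt (gg_pos _ _ (by linarith))
    have hA : (0:ℝ) < a := ha0
    rw [div_eq_div_iff]
    · ring
    · exact mul_ne_zero (mul_ne_zero (mul_ne_zero hΓ (pow_ne_zero _ hane)) hg0)
        (mul_ne_zero (mul_ne_zero hΓ (pow_ne_zero _ hane)) hg2)
    · exact mul_ne_zero hg0 hg2
  rw [heq]
  apply StrictMono.comp (ratio_strictMono (ρ / κ - 1 + k) hq)
  intro x y hxy
  have := sub_lt_sub_right hxy μ
  exact (mul_lt_mul_iff_right₀ ha0).2 this
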